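/- Let E be a real inner product space, L : E → E a linear map, N : E → E, and γ ∈ ℝ with γ ≠ 1. Suppose y ∈ E satisfies ⟨N(y), y⟩ ≠ 0, r := ⟨L y, y⟩ / ⟨N(y), y⟩ > 0, and L y = r^γ • N(y) (i.e., y is a fixed point of the Petviashvili iteration, L y = s(y) • N(y) with s(y) = r^γ). Then r = 1, hence s(y) = 1 and L y = N(y); that is, every such fixed point of the Petviashvili iteration is a solution of the original system. -/

import Mathlib

/-- Every fixed point of the Petviashvili iteration (with `γ ≠ 1`, `⟨N y, y⟩ ≠ 0` and
positive ratio `r = ⟨L y, y⟩ / ⟨N y, y⟩`) is a solution of the original system: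
`r = 1`, hence `s(y) = 1` and `L y = N y`. -/
theorem fixed_point_of_petviashvili_is_solution
    {E : Type*} [NormedAddCommGroup E] [InnerProductSpace ℝ E]
    (L : E →ₗ[ℝ] E) (N : E → E) (γ : ℝ) (hγ : γ ≠ 1)
    (y : E) (hne : (inner ℝ (N y) y : ℝ) ≠ 0)
    (hpos : 0 < (inner ℝ (L y) y : ℝ) / (inner ℝ (N y) y : ℝ))
    (hfix : L y = (((inner ℝ (L y) y : ℝ) / (inner ℝ (N y) y : ℝ)) ^ γ) • N y) :
    (inner ℝ (L y) y : ℝ) / (inner ℝ (N y) y : ℝ) = 1 ∧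
    ((inner ℝ (L y) y : ℝ) / (inner ℝ (N y) y : ℝ)) ^ γ = 1 ∧
    L y = N y := by
  set r : ℝ := (inner ℝ (L y) y : ℝ) / (inner ℝ (N y) y : ℝ) with hr
  have hinner : (inner ℝ (L y) y : ℝ) = r ^ γ * (inner ℝ (N y) y : ℝ) := by
    rw [hfix, real_inner_smul_left]
  have hrγ : r ^ γ = r := by
    conv_rhs => rw [hr, hinner, mul_div_assoc, div_self hne, mul_one]
  have hr1 : r = 1 := by
    have hlog : γ * Real.log r = Real.log r := by
      have := congrArg Real.log hrγ
      rwa [Real.log_rpow hpos] at this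
    have : (γ - 1) * Real.log r = 0 := by linear_combination hlog
    rcases mul_eq_zero.mp this with h | h
    · exact absurd (by linarith) hγ
    · exact Real.exp_log hpos ▸ (by rw [h, Real.exp_zero])
  refine ⟨hr1, by rw [hrγ, hr1], ?_⟩
  rw [hfix, hrγ, hr1, one_smul]
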